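/- Let E be a finite-dimensional real normed vector space, L_d : E × E → ℝ continuously differentiable, N ≥ 2 an integer, and fix endpoints q₀, q_N ∈ E. Define the discrete action A_d : E^{N-1} → ℝ by A_d(q₁, …, q_{N-1}) = Σ_{k=1}^{N} L_d(q_{k-1}, q_k). Then (q₁, …, q_{N-1}) is a critical point of A_d (its Fréchet derivative vanishes) if and only if the discrete Euler–Lagrange equations hold: D₁L_d(q_k, q_{k+1}) + D₂L_d(q_{k-1}, q_k) = 0 in E* for every k = 1, …, N−1. -/

import Mathlib

open scoped BigOperators

/-- The discrete path determined by interior points `p : Fin (N-1) → E` and fixed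
endpoints `a = q₀`, `b = q_N`. -/
def discretePath {E : Type*} (N : ℕ) (a b : E) (p : Fin (N - 1) → E) (k : ℕ) : E :=
  if h : 1 ≤ k ∧ k ≤ N - 1 then p ⟨k - 1, by omega⟩
  else if k = 0 then a else b

/-- The derivative of `p ↦ discretePath N a b p k`. -/
noncomputable def pathCLM (E : Type*) [NormedAddCommGroup E] [NormedSpace ℝ E]
    (N k : ℕ) : (Fin (N - 1) → E) →L[ℝ] E :=
  if h : 1 ≤ k ∧ k ≤ N - 1 then ContinuousLinearMap.proj ⟨k - 1, by omega⟩ else 0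

lemma hasFDerivAt_discretePath {E : Type*} [NormedAddCommGroup E] [NormedSpace ℝ E]
    (N : ℕ) (a b : E) (k : ℕ) (p : Fin (N - 1) → E) :
    HasFDerivAt (fun p : Fin (N - 1) → E => discretePath N a b p k)
      (pathCLM E N k) p := by
  unfold discretePath pathCLM
  by_cases h : 1 ≤ k ∧ k ≤ N - 1
  · simp only [dif_pos h]
    exact (ContinuousLinearMap.proj (R := ℝ) (φ := fun _ : Fin (N - 1) => E)
      ⟨k - 1, by omega⟩).hasFDerivAt
  · simp only [dif_neg h]
    exact hasFDerivAt_const _ _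

lemma fderiv_partial_fst {E : Type*} [NormedAddCommGroup E] [NormedSpace ℝ E]
    (L : E × E → ℝ) (hL : Differentiable ℝ L) (a b u : E) :
    fderiv ℝ (fun x => L (x, b)) a u = fderiv ℝ L (a, b) (u, 0) := by
  have h : HasFDerivAt (fun x => L (x, b))
      ((fderiv ℝ L (a, b)).comp (ContinuousLinearMap.inl ℝ E E)) a :=
    (hL (a, b)).hasFDerivAt.comp a (hasFDerivAt_prodMk_left a b)
  rw [h.fderiv]; rfl

lemma fderiv_partial_snd {E : Type*} [NormedAddCommGroup E] [NormedSpace ℝ E]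
    (L : E × E → ℝ) (hL : Differentiable ℝ L) (a b w : E) :
    fderiv ℝ (fun y => L (a, y)) b w = fderiv ℝ L (a, b) (0, w) := by
  have h : HasFDerivAt (fun y => L (a, y))
      ((fderiv ℝ L (a, b)).comp (ContinuousLinearMap.inr ℝ E E)) b :=
    (hL (a, b)).hasFDerivAt.comp b (hasFDerivAt_prodMk_right a b)
  rw [h.fderiv]; rfl

lemma fderiv_prod_split {E : Type*} [NormedAddCommGroup E] [NormedSpace ℝ E]
    (L : E × E → ℝ) (hL : Differentiable ℝ L) (a b u w : E) :
    fderiv ℝ L (a, b) (u, w)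
      = fderiv ℝ (fun x => L (x, b)) a u + fderiv ℝ (fun y => L (a, y)) b w := by
  rw [fderiv_partial_fst L hL, fderiv_partial_snd L hL, ← map_add]
  congr 1
  simp

/-- **Discrete Euler–Lagrange equations.**  A configuration of interior points is a
critical point of the discrete action (with fixed endpoints) iff the discrete
Euler–Lagrange equations hold. -/
theorem discrete_euler_lagrange_iff_critical
    {E : Type*} [NormedAddCommGroup E] [NormedSpace ℝ E] [FiniteDimensional ℝ E]
    (L : E × E → ℝ) (hL : ContDiff ℝ 1 L)
    (N : ℕ) (hN : 2 ≤ N) (q₀ qN : E) (q : Fin (N - 1) → E) :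
    fderiv ℝ
        (fun p : Fin (N - 1) → E =>
          ∑ k ∈ Finset.range N,
            L (discretePath N q₀ qN p k, discretePath N q₀ qN p (k + 1))) q = 0
      ↔ ∀ k : ℕ, 1 ≤ k → k ≤ N - 1 →
          fderiv ℝ (fun x => L (x, discretePath N q₀ qN q (k + 1)))
              (discretePath N q₀ qN q k)
            + fderiv ℝ (fun y => L (discretePath N q₀ qN q (k - 1), y))
              (discretePath N q₀ qN q k) = 0 := by
  have hLd : Differentiable ℝ L := hL.differentiable one_ne_zero
  -- notation
  set x : ℕ → E := fun k => discretePath N q₀ qN q k with hxdef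
  set G : ℕ → E →L[ℝ] ℝ := fun k =>
    fderiv ℝ (fun x' => L (x', x (k + 1))) (x k)
      + fderiv ℝ (fun y => L (x (k - 1), y)) (x k) with hGdef
  -- derivative of the action
  have hA : HasFDerivAt
      (fun p : Fin (N - 1) → E =>
        ∑ k ∈ Finset.range N,
          L (discretePath N q₀ qN p k, discretePath N q₀ qN p (k + 1)))
      (∑ k ∈ Finset.range N,
        (fderiv ℝ L (x k, x (k + 1))).comp
          ((pathCLM E N k).prod (pathCLM E N (k + 1)))) q := by
    refine HasFDerivAt.fun_sum fun k _ => ?_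
    exact (hLd (x k, x (k + 1))).hasFDerivAt.comp q
      ((hasFDerivAt_discretePath N q₀ qN k q).prodMk
        (hasFDerivAt_discretePath N q₀ qN (k + 1) q))
  rw [hA.fderiv]
  -- regroup the sum
  have hrange : Finset.range N = Finset.range ((N - 1) + 1) := by
    rw [Nat.sub_add_cancel (by omega)]
  have hΦ0 : pathCLM E N 0 = 0 := by
    rw [pathCLM, dif_neg]; omega
  have hΦN : pathCLM E N ((N - 1) + 1) = 0 := by
    rw [pathCLM, dif_neg]; omega
  have hΦ : ∀ (i : ℕ) (hi : i < N - 1) (v : Fin (N - 1) → E),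
      pathCLM E N (i + 1) v = v ⟨i, hi⟩ := by
    intro i hi v
    rw [pathCLM, dif_pos ⟨by omega, by omega⟩]
    simp
  have hsum : (∑ k ∈ Finset.range N,
      (fderiv ℝ L (x k, x (k + 1))).comp
        ((pathCLM E N k).prod (pathCLM E N (k + 1))))
      = ∑ i ∈ Finset.range (N - 1), (G (i + 1)).comp (pathCLM E N (i + 1)) := by
    ext v
    simp only [ContinuousLinearMap.coe_sum', Finset.sum_apply,
      ContinuousLinearMap.coe_comp', Function.comp_apply,
      ContinuousLinearMap.prod_apply]
    have hterm : ∀ k ∈ Finset.range N,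
        fderiv ℝ L (x k, x (k + 1)) (pathCLM E N k v, pathCLM E N (k + 1) v)
          = fderiv ℝ (fun x' => L (x', x (k + 1))) (x k) (pathCLM E N k v)
            + fderiv ℝ (fun y => L (x k, y)) (x (k + 1)) (pathCLM E N (k + 1) v) :=
      fun k _ => fderiv_prod_split L hLd _ _ _ _
    rw [Finset.sum_congr rfl hterm, Finset.sum_add_distrib]
    have e1 : (∑ k ∈ Finset.range N,
        fderiv ℝ (fun x' => L (x', x (k + 1))) (x k) (pathCLM E N k v))
        = ∑ i ∈ Finset.range (N - 1),
            fderiv ℝ (fun x' => L (x', x (i + 1 + 1))) (x (i + 1))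
              (pathCLM E N (i + 1) v) := by
      rw [hrange, Finset.sum_range_succ']
      simp [hΦ0]
    have e2 : (∑ k ∈ Finset.range N,
        fderiv ℝ (fun y => L (x k, y)) (x (k + 1)) (pathCLM E N (k + 1) v))
        = ∑ i ∈ Finset.range (N - 1),
            fderiv ℝ (fun y => L (x i, y)) (x (i + 1)) (pathCLM E N (i + 1) v) := by
      rw [hrange, Finset.sum_range_succ]
      simp [hΦN]
    rw [e1, e2, ← Finset.sum_add_distrib]
    refine Finset.sum_congr rfl fun i hi => ?_
    simp only [hGdef, ContinuousLinearMap.add_apply, Nat.add_sub_cancel]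
  rw [hsum]
  constructor
  · intro h k hk1 hk2
    have hj : k - 1 < N - 1 := by omega
    ext e
    have h0 := ContinuousLinearMap.ext_iff.mp h (Pi.single ⟨k - 1, hj⟩ e)
    simp only [ContinuousLinearMap.coe_sum', Finset.sum_apply,
      ContinuousLinearMap.coe_comp', Function.comp_apply,
      ContinuousLinearMap.zero_apply] at h0
    have hc : ∀ i ∈ Finset.range (N - 1),
        G (i + 1) (pathCLM E N (i + 1) (Pi.single ⟨k - 1, hj⟩ e))
          = if i = k - 1 then G (i + 1) e else 0 := by
      intro i hi
      rw [Finset.mem_range] at hi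
      rw [hΦ i hi]
      rw [Pi.single_apply]
      have : ((⟨i, by omega⟩ : Fin (N - 1)) = ⟨k - 1, hj⟩) ↔ i = k - 1 := by
        simp [Fin.ext_iff]
      split_ifs with h1 h2 h2
      · rfl
      · exact absurd (this.mp h1) h2
      · exact absurd (this.mpr h2) h1
      · exact map_zero _
    rw [Finset.sum_congr rfl hc, Finset.sum_ite_eq'] at h0
    rw [if_pos (Finset.mem_range.mpr hj)] at h0
    have hk : k - 1 + 1 = k := by omega
    rw [hk] at h0
    exact h0
  · intro h
    refine Finset.sum_eq_zero fun i hi => ?_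
    rw [Finset.mem_range] at hi
    have hG0 : G (i + 1) = 0 := h (i + 1) (by omega) (by omega)
    rw [hG0, ContinuousLinearMap.zero_comp]
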